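/- Let a, b ∈ Dⁿ be incomparable in the componentwise order, and define A = #{i : aᵢ=0, bᵢ≠0}, B = #{i : bᵢ=0, aᵢ≠0}, C = #{i : aᵢ=bᵢ=0}, N = #{i : aᵢ≠0, bᵢ≠0, aᵢ≠bᵢ}. Then z(a∧₀b)² + α·z(a∨₀b)² + (1-α)·z(a∨₁b)² − z(a)² − z(b)² = 2(AB + AN + BN + (1+α)CN) + (1+α)N² > 0, where z(c) denotes the number of zero coordinates of c. -/
import Mathlib


open Finset

/-- The three-element domain `D = {-α, 0, 1}`, abstractly. -/
inductive D3 : Type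
  | neg : D3
  | zero : D3
  | one : D3
deriving DecidableEq

instance : Fintype D3 :=
  ⟨{D3.neg, D3.zero, D3.one}, by rintro (_ | _ | _) <;> simp⟩

namespace D3

/-- The embedding of `D3` into `ℝ` sending `neg ↦ -α`, `zero ↦ 0`, `one ↦ 1`. -/
def emb (α : ℝ) : D3 → ℝ
  | neg => -α
  | zero => 0
  | one => 1

/-- The partial order `0 ≺ 1`, `0 ≺ -α`, with `1` and `-α` incomparable. -/
instance : PartialOrder D3 where
  le x y := x = y ∨ x = zero
  le_refl x := Or.inl rfl
  le_trans x y z hxy hyz := by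
    rcases hxy with rfl | rfl
    · exact hyz
    · exact Or.inr rfl
  le_antisymm x y hxy hyx := by
    rcases hxy with rfl | rfl
    · rfl
    · rcases hyx with rfl | rfl <;> rfl

/-- `∧₀` : `1 ∧₀ (-α) = (-α) ∧₀ 1 = 0`, and min w.r.t. `≺` otherwise. -/
def meet0 (x y : D3) : D3 := if x = y then x else zero

/-- `∨₀` : `1 ∨₀ (-α) = (-α) ∨₀ 1 = 0`, and max w.r.t. `≺` otherwise. -/
def join0 (x y : D3) : D3 :=
  if x = y then x else if x = zero then y else if y = zero then x else zero

/-- `∨₁` : `1 ∨₁ (-α) = (-α) ∨₁ 1 = 1`, and max w.r.t. `≺` otherwise. -/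
def join1 (x y : D3) : D3 :=
  if x = y then x else if x = zero then y else if y = zero then x else one

end D3

/-- Componentwise `∧₀` on `Dⁿ`. -/
def vmeet0 {n : ℕ} (a b : Fin n → D3) : Fin n → D3 := fun i => D3.meet0 (a i) (b i)

/-- Componentwise `∨₀` on `Dⁿ`. -/
def vjoin0 {n : ℕ} (a b : Fin n → D3) : Fin n → D3 := fun i => D3.join0 (a i) (b i)

/-- Componentwise `∨₁` on `Dⁿ`. -/
def vjoin1 {n : ℕ} (a b : Fin n → D3) : Fin n → D3 := fun i => D3.join1 (a i) (b i)

/-- `lam` is a probability distribution on `Dⁿ`. -/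
def IsDist (n : ℕ) (lam : (Fin n → D3) → ℝ) : Prop :=
  (∀ a, 0 ≤ lam a ∧ lam a ≤ 1) ∧ ∑ a : Fin n → D3, lam a = 1

/-- `lam` has marginal vector `x`, i.e. `Σ_a lam(a)·a = x` in `ℝⁿ`. -/
def HasMarginal (α : ℝ) (n : ℕ) (lam : (Fin n → D3) → ℝ) (x : Fin n → ℝ) : Prop :=
  ∀ i, ∑ a : Fin n → D3, lam a * D3.emb α (a i) = x i

/-- The support of `lam` forms a chain w.r.t. the componentwise order on `Dⁿ`. -/
def ChainSupp (n : ℕ) (lam : (Fin n → D3) → ℝ) : Prop :=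
  ∀ a b : Fin n → D3, lam a ≠ 0 → lam b ≠ 0 → a ≤ b ∨ b ≤ a

/-- The box `[-α,1]ⁿ`. -/
def Box (α : ℝ) (n : ℕ) : Set (Fin n → ℝ) := {x | ∀ i, x i ∈ Set.Icc (-α) 1}

/-- `f : Dⁿ → ℝ` is α-bisubmodular. -/
def AlphaBisub (α : ℝ) (n : ℕ) (f : (Fin n → D3) → ℝ) : Prop :=
  ∀ a b : Fin n → D3,
    f (vmeet0 a b) + α * f (vjoin0 a b) + (1 - α) * f (vjoin1 a b) ≤ f a + f b

/-- Number of zero coordinates. -/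
def zc {n : ℕ} (c : Fin n → D3) : ℕ := (Finset.univ.filter fun i => c i = D3.zero).card

/-- The convex closure `f⁻(x)`. -/
noncomputable def cClos (α : ℝ) (n : ℕ) (f : (Fin n → D3) → ℝ) (x : Fin n → ℝ) : ℝ :=
  sInf {y | ∃ lam, IsDist n lam ∧ HasMarginal α n lam x ∧ y = ∑ a : Fin n → D3, lam a * f a}
/-- Number of coordinates with `a i = 0`, `b i ≠ 0`. -/
def cntA {n : ℕ} (a b : Fin n → D3) : ℕ :=
  (Finset.univ.filter fun i => a i = D3.zero ∧ b i ≠ D3.zero).card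

/-- Number of coordinates with `b i = 0`, `a i ≠ 0`. -/
def cntB {n : ℕ} (a b : Fin n → D3) : ℕ :=
  (Finset.univ.filter fun i => b i = D3.zero ∧ a i ≠ D3.zero).card

/-- Number of coordinates with `a i = b i = 0`. -/
def cntC {n : ℕ} (a b : Fin n → D3) : ℕ :=
  (Finset.univ.filter fun i => a i = D3.zero ∧ b i = D3.zero).card

/-- Number of coordinates with `a i ≠ 0`, `b i ≠ 0`, `a i ≠ b i`. -/
def cntN {n : ℕ} (a b : Fin n → D3) : ℕ :=
  (Finset.univ.filter fun i => a i ≠ D3.zero ∧ b i ≠ D3.zero ∧ a i ≠ b i).card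

lemma zc_meet0 {n : ℕ} (a b : Fin n → D3) :
    zc (vmeet0 a b) = cntA a b + cntB a b + cntC a b + cntN a b := by
  unfold zc cntA cntB cntC cntN vmeet0
  rw [Finset.card_filter, Finset.card_filter, Finset.card_filter, Finset.card_filter,
    Finset.card_filter, ← Finset.sum_add_distrib, ← Finset.sum_add_distrib,
    ← Finset.sum_add_distrib]
  refine Finset.sum_congr rfl fun i _ => ?_
  cases ha : a i <;> cases hb : b i <;> simp [D3.meet0]

lemma zc_join0 {n : ℕ} (a b : Fin n → D3) :
    zc (vjoin0 a b) = cntC a b + cntN a b := by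
  unfold zc cntC cntN vjoin0
  rw [Finset.card_filter, Finset.card_filter, Finset.card_filter, ← Finset.sum_add_distrib]
  refine Finset.sum_congr rfl fun i _ => ?_
  cases ha : a i <;> cases hb : b i <;> simp [D3.join0]

lemma zc_join1 {n : ℕ} (a b : Fin n → D3) :
    zc (vjoin1 a b) = cntC a b := by
  unfold zc cntC vjoin1
  rw [Finset.card_filter, Finset.card_filter]
  refine Finset.sum_congr rfl fun i _ => ?_
  cases ha : a i <;> cases hb : b i <;> simp [D3.join1]

lemma zc_a {n : ℕ} (a b : Fin n → D3) : zc a = cntA a b + cntC a b := by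
  unfold zc cntA cntC
  rw [Finset.card_filter, Finset.card_filter, Finset.card_filter, ← Finset.sum_add_distrib]
  refine Finset.sum_congr rfl fun i _ => ?_
  cases ha : a i <;> cases hb : b i <;> simp

lemma zc_b {n : ℕ} (a b : Fin n → D3) : zc b = cntB a b + cntC a b := by
  unfold zc cntB cntC
  rw [Finset.card_filter, Finset.card_filter, Finset.card_filter, ← Finset.sum_add_distrib]
  refine Finset.sum_congr rfl fun i _ => ?_
  cases ha : a i <;> cases hb : b i <;> simp

lemma notle_cnt {n : ℕ} (a b : Fin n → D3) (h : ¬ a ≤ b) :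
    0 < cntB a b ∨ 0 < cntN a b := by
  rw [Pi.le_def] at h
  push_neg at h
  obtain ⟨i, hi⟩ := h
  have hne : a i ≠ b i ∧ a i ≠ D3.zero := by
    by_contra hc
    push_neg at hc
    rcases eq_or_ne (a i) (b i) with h1 | h1
    · exact hi (Or.inl h1)
    · exact hi (Or.inr (hc h1))
  rcases eq_or_ne (b i) D3.zero with hb | hb
  · left
    rw [cntB, Finset.card_pos]
    exact ⟨i, by simp [hb, hne.2]⟩
  · right
    rw [cntN, Finset.card_pos]
    exact ⟨i, by simp [hb, hne.1, hne.2]⟩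

/-- the counting identity for `z(·)²` and its strict positivity. -/
theorem stmt12 (α : ℝ) (hα : α ∈ Set.Ioc (0 : ℝ) 1) (n : ℕ) (a b : Fin n → D3)
    (hab : ¬ a ≤ b) (hba : ¬ b ≤ a) :
    (zc (vmeet0 a b) : ℝ) ^ 2 + α * (zc (vjoin0 a b) : ℝ) ^ 2
        + (1 - α) * (zc (vjoin1 a b) : ℝ) ^ 2 - (zc a : ℝ) ^ 2 - (zc b : ℝ) ^ 2
      = 2 * ((cntA a b : ℝ) * (cntB a b : ℝ) + (cntA a b : ℝ) * (cntN a b : ℝ)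
          + (cntB a b : ℝ) * (cntN a b : ℝ)
          + (1 + α) * (cntC a b : ℝ) * (cntN a b : ℝ)) + (1 + α) * (cntN a b : ℝ) ^ 2 ∧
    0 < 2 * ((cntA a b : ℝ) * (cntB a b : ℝ) + (cntA a b : ℝ) * (cntN a b : ℝ)
          + (cntB a b : ℝ) * (cntN a b : ℝ)
          + (1 + α) * (cntC a b : ℝ) * (cntN a b : ℝ)) + (1 + α) * (cntN a b : ℝ) ^ 2 := by
  have eN : cntN b a = cntN a b := by
    unfold cntN
    congr 1
    ext i
    simp only [Finset.mem_filter, Finset.mem_univ, true_and]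
    constructor <;> rintro ⟨h1, h2, h3⟩ <;> exact ⟨h2, h1, Ne.symm h3⟩
  have hBN := notle_cnt a b hab
  have hAN : 0 < cntA a b ∨ 0 < cntN a b := by
    have h := notle_cnt b a hba
    have eB : cntB b a = cntA a b := rfl
    rw [eB, eN] at h
    exact h
  clear hab hba
  have hα1 : (0 : ℝ) < 1 + α := by linarith [hα.1]
  have hAr : (0 : ℝ) ≤ cntA a b := Nat.cast_nonneg _
  have hBr : (0 : ℝ) ≤ cntB a b := Nat.cast_nonneg _
  have hCr : (0 : ℝ) ≤ cntC a b := Nat.cast_nonneg _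
  have hNr : (0 : ℝ) ≤ cntN a b := Nat.cast_nonneg _
  constructor
  · rw [zc_meet0, zc_join0, zc_join1, zc_a a b, zc_b a b]
    push_cast
    ring
  · rcases hAN with hA | hN
    · rcases hBN with hB | hN
      · have hA' : (0 : ℝ) < cntA a b := by exact_mod_cast hA
        have hB' : (0 : ℝ) < cntB a b := by exact_mod_cast hB
        nlinarith [mul_nonneg hAr hNr, mul_nonneg hBr hNr, mul_nonneg hCr hNr,
          mul_nonneg hNr hNr, mul_pos hA' hB']
      · have hN' : (0 : ℝ) < cntN a b := by exact_mod_cast hN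
        nlinarith [mul_nonneg hAr hBr, mul_nonneg hAr hNr, mul_nonneg hBr hNr,
          mul_nonneg hCr hNr, mul_pos hN' hN']
    · have hN' : (0 : ℝ) < cntN a b := by exact_mod_cast hN
      nlinarith [mul_nonneg hAr hBr, mul_nonneg hAr hNr, mul_nonneg hBr hNr,
        mul_nonneg hCr hNr, mul_pos hN' hN']
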